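/- There is a universal constant c > 0 with the following property. For every d ≥ 1, n ≥ 1, ε₁,…,ε_n ∈ (0,1], and β ∈ (0,1), there exist measurable spaces Y₁,…,Y_n, Markov kernels Cᵢ from [d] to Yᵢ such that Cᵢ is εᵢ-LDP for each i, and a measurable estimator p̂ : Y₁ × ⋯ × Y_n → ℝ^d, such that for every probability distribution P on [d], with X₁,…,X_n i.i.d. P and, conditionally, Yᵢ ∼ Cᵢ(Xᵢ) independently across i, with probability at least 1 − β one has max_{v∈[d]} | p̂(Y₁,…,Y_n)_v − P({v}) | ≤ min( c · sqrt( log(d/β) / Σ_{i=1}^n εᵢ² ), 1 ). -/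

import Mathlib

open MeasureTheory ProbabilityTheory Real Finset
open scoped ENNReal BigOperators

/-- clamp to [0,1] shrinks distance to points of [0,1] -/
lemma clamp_dist (x q : ℝ) (h0 : 0 ≤ q) (h1 : q ≤ 1) :
    |min 1 (max 0 x) - q| ≤ |x - q| := by
  rcases le_total x 0 with h | h
  · rw [max_eq_left h, min_eq_right (by norm_num : (0:ℝ) ≤ 1)]
    rw [abs_of_nonpos (by linarith), abs_of_nonpos (by linarith)]
    linarith
  · rw [max_eq_right h]
    rcases le_total x 1 with h' | h'
    · rw [min_eq_right h']
    · rw [min_eq_left h', abs_of_nonneg (by linarith), abs_of_nonneg (by linarith)]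
      linarith

lemma clamp_mem (x : ℝ) : 0 ≤ min 1 (max 0 x) ∧ min 1 (max 0 x) ≤ 1 :=
  ⟨le_min (by norm_num) (le_max_left _ _), min_le_left _ _⟩

/-- quadratic bound on exp for |x| ≤ 1 -/
lemma exp_le_quadratic {x : ℝ} (hx : |x| ≤ 1) : Real.exp x ≤ 1 + x + x ^ 2 := by
  have h := Real.exp_bound hx (by norm_num : 0 < 2)
  have h2 : |Real.exp x - (1 + x)| ≤ |x| ^ 2 * (3 / 4) := by
    convert h using 2
    · simp [Finset.sum_range_succ]
    · norm_num
  have := (abs_le.mp h2).2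
  nlinarith [sq_abs x, sq_nonneg x]

/-- mgf bound for a centered bounded finite random variable -/
lemma mgf_bound {Ω : Type*} [Fintype Ω] (ρ : Ω → ℝ) (h0 : ∀ z, 0 ≤ ρ z)
    (h1 : ∑ z, ρ z = 1) (F : Ω → ℝ) (M l : ℝ)
    (hM : ∀ z, |F z| ≤ M) (hmean : ∑ z, ρ z * F z = 0)
    (hl : 0 ≤ l) (hlM : l * M ≤ 1) (hMnn : 0 ≤ M) :
    ∑ z, ρ z * Real.exp (l * F z) ≤ Real.exp (l ^ 2 * M ^ 2) := by
  have step1 : ∑ z, ρ z * Real.exp (l * F z)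
      ≤ ∑ z, ρ z * (1 + l * F z + l ^ 2 * M ^ 2) := by
    apply Finset.sum_le_sum
    intro z _
    apply mul_le_mul_of_nonneg_left _ (h0 z)
    have habs : |l * F z| ≤ 1 := by
      rw [abs_mul, abs_of_nonneg hl]
      exact le_trans (mul_le_mul_of_nonneg_left (hM z) hl) hlM
    refine le_trans (exp_le_quadratic habs) ?_
    have : (l * F z) ^ 2 ≤ l ^ 2 * M ^ 2 := by
      rw [mul_pow]
      apply mul_le_mul_of_nonneg_left _ (sq_nonneg l)
      rw [← sq_abs (F z)]
      exact pow_le_pow_left₀ (abs_nonneg _) (hM z) 2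
    linarith
  have step2 : ∑ z, ρ z * (1 + l * F z + l ^ 2 * M ^ 2)
      = 1 + l ^ 2 * M ^ 2 := by
    have : ∀ z, ρ z * (1 + l * F z + l ^ 2 * M ^ 2)
        = ρ z + l * (ρ z * F z) + (l ^ 2 * M ^ 2) * ρ z := by intro z; ring
    rw [Finset.sum_congr rfl (fun z _ => this z)]
    rw [Finset.sum_add_distrib, Finset.sum_add_distrib, h1, ← Finset.mul_sum,
      ← Finset.mul_sum, hmean, h1]
    ring
  calc ∑ z, ρ z * Real.exp (l * F z) ≤ 1 + l ^ 2 * M ^ 2 := by rw [← step2]; exact step1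
    _ ≤ Real.exp (l ^ 2 * M ^ 2) := by
        have := Real.add_one_le_exp (l ^ 2 * M ^ 2); linarith

/-- finite Chernoff bound -/
lemma chernoff_real {n : ℕ} {Ω : Fin n → Type*} [∀ i, Fintype (Ω i)]
    [∀ i, DecidableEq (Ω i)]
    (ρ : ∀ i, Ω i → ℝ) (h0 : ∀ i z, 0 ≤ ρ i z)
    (F : ∀ i, Ω i → ℝ) (l : ℝ) (hl : 0 ≤ l) (κ : Fin n → ℝ)
    (hmgf : ∀ i, ∑ z, ρ i z * Real.exp (l * F i z) ≤ Real.exp (κ i)) (r : ℝ) :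
    ∑ y ∈ Finset.univ.filter (fun y : (∀ i, Ω i) => r ≤ ∑ i, F i (y i)),
      ∏ i, ρ i (y i) ≤ Real.exp (∑ i, κ i - l * r) := by
  have hterm : ∀ y : ∀ i, Ω i, 0 ≤ ∏ i, ρ i (y i) :=
    fun y => Finset.prod_nonneg fun i _ => h0 i (y i)
  have step1 : ∑ y ∈ Finset.univ.filter (fun y : (∀ i, Ω i) => r ≤ ∑ i, F i (y i)),
      ∏ i, ρ i (y i)
      ≤ ∑ y : (∀ i, Ω i), (∏ i, ρ i (y i)) * Real.exp (l * (∑ i, F i (y i) - r)) := by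
    refine le_trans (Finset.sum_le_sum ?_) (Finset.sum_le_sum_of_subset_of_nonneg
      (Finset.filter_subset _ _) ?_)
    · intro y hy
      rw [Finset.mem_filter] at hy
      have h1' : (1:ℝ) ≤ Real.exp (l * (∑ i, F i (y i) - r)) :=
        Real.one_le_exp (mul_nonneg hl (by linarith [hy.2]))
      nlinarith [hterm y]
    · intro y _ _
      exact mul_nonneg (hterm y) (Real.exp_nonneg _)
  have step2 : ∀ y : ∀ i, Ω i, (∏ i, ρ i (y i)) * Real.exp (l * (∑ i, F i (y i) - r))
      = Real.exp (-(l * r)) * ∏ i, (ρ i (y i) * Real.exp (l * F i (y i))) := by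
    intro y
    rw [Finset.prod_mul_distrib, mul_sub, sub_eq_add_neg, Real.exp_add, Finset.mul_sum,
      Real.exp_sum]
    ring
  have step3 : ∑ y : (∀ i, Ω i), ∏ i, (ρ i (y i) * Real.exp (l * F i (y i)))
      = ∏ i, ∑ z, (ρ i z * Real.exp (l * F i z)) := by
    rw [Finset.prod_univ_sum]
    rw [Fintype.piFinset_univ]
  have step4 : ∏ i, ∑ z, (ρ i z * Real.exp (l * F i z)) ≤ ∏ i, Real.exp (κ i) := by
    apply Finset.prod_le_prod
    · intro i _
      exact Finset.sum_nonneg fun z _ => mul_nonneg (h0 i z) (Real.exp_nonneg _)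
    · intro i _; exact hmgf i
  calc ∑ y ∈ Finset.univ.filter (fun y : (∀ i, Ω i) => r ≤ ∑ i, F i (y i)),
      ∏ i, ρ i (y i)
      ≤ ∑ y : (∀ i, Ω i), (∏ i, ρ i (y i)) * Real.exp (l * (∑ i, F i (y i) - r)) := step1
    _ = Real.exp (-(l * r)) * ∑ y : (∀ i, Ω i), ∏ i, (ρ i (y i) * Real.exp (l * F i (y i))) := by
        rw [Finset.mul_sum]; exact Finset.sum_congr rfl fun y _ => step2 y
    _ ≤ Real.exp (-(l * r)) * ∏ i, Real.exp (κ i) := by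
        rw [step3]
        exact mul_le_mul_of_nonneg_left step4 (Real.exp_nonneg _)
    _ = Real.exp (∑ i, κ i - l * r) := by
        rw [← Real.exp_sum, ← Real.exp_add]; ring_nf

lemma ofReal_prod_of_nonneg {ι : Type*} (s : Finset ι) (f : ι → ℝ)
    (h : ∀ i ∈ s, 0 ≤ f i) :
    ENNReal.ofReal (∏ i ∈ s, f i) = ∏ i ∈ s, ENNReal.ofReal (f i) := by
  induction s using Finset.cons_induction with
  | empty => simp
  | cons a s ha ih =>
      rw [Finset.prod_cons, Finset.prod_cons,
        ENNReal.ofReal_mul (h a (Finset.mem_cons_self a s)),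
        ih (fun i hi => h i (Finset.mem_cons_of_mem hi))]

lemma measure_apply_fintype {Ω : Type*} [Fintype Ω] [MeasurableSpace Ω]
    [MeasurableSingletonClass Ω] (μ : Measure Ω) (A : Set Ω)
    [DecidablePred (· ∈ A)] :
    μ A = ∑ y ∈ Finset.univ.filter (· ∈ A), μ {y} := by
  have hA : A = ⋃ y ∈ Finset.univ.filter (· ∈ A), ({y} : Set Ω) := by
    ext z; simp
  refine (congrArg μ hA).trans (measure_biUnion_finset ?_ (fun y _ => measurableSet_singleton y))
  intro x _ y _ hxy
  simp [Set.disjoint_singleton, hxy]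

/-- A kernel `C` is `ε`-LDP if `C x W ≤ e^ε · C x' W` for all inputs `x, x'` and
measurable `W`. -/
def IsLDP {α β : Type*} [MeasurableSpace α] [MeasurableSpace β]
    (C : ProbabilityTheory.Kernel α β) (ε : ℝ) : Prop :=
  ∀ x x' : α, ∀ W : Set β, MeasurableSet W →
    C x W ≤ ENNReal.ofReal (Real.exp ε) * C x' W

set_option maxHeartbeats 1000000 in
theorem stmt19 :
    ∃ c : ℝ, 0 < c ∧
      ∀ (d : ℕ), 1 ≤ d → ∀ (n : ℕ), 1 ≤ n →
      ∀ ε : Fin n → ℝ, (∀ i, ε i ∈ Set.Ioc (0 : ℝ) 1) →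
      ∀ β : ℝ, β ∈ Set.Ioo (0 : ℝ) 1 →
      ∃ (Y : Fin n → Type) (mY : ∀ i, MeasurableSpace (Y i))
        (C : ∀ i, ProbabilityTheory.Kernel (Fin d) (Y i))
        (estim : (∀ i, Y i) → Fin d → ℝ),
        (∀ i, IsMarkovKernel (C i)) ∧
        (∀ i, IsLDP (C i) (ε i)) ∧
        Measurable estim ∧
        ∀ P : Measure (Fin d), IsProbabilityMeasure P →
          ENNReal.ofReal (1 - β) ≤
            (Measure.pi fun i => Measure.bind P (fun x => C i x))
              {y | ∀ v : Fin d,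
                |estim y v - (P {v}).toReal|
                  ≤ min (c * Real.sqrt (Real.log (d / β) / ∑ i, (ε i) ^ 2)) 1} := by
  classical
  refine ⟨20, by norm_num, ?_⟩
  intro d hd n hn ε hε β hβ
  obtain ⟨hβ0, hβ1⟩ := hβ
  have hε0 : ∀ i, 0 < ε i := fun i => (hε i).1
  have hε1 : ∀ i, ε i ≤ 1 := fun i => (hε i).2
  have hn0 : 0 < n := hn
  rcases eq_or_lt_of_le hd with hd1 | hd2
  · -- d = 1 : trivial estimator
    subst hd1
    refine ⟨fun _ => Unit, fun _ => inferInstance,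
      fun _ => ProbabilityTheory.Kernel.const _ (Measure.dirac ()), fun _ _ => 1,
      fun i => by infer_instance, ?_, measurable_const, ?_⟩
    · intro i x x' W hW
      have h1 : (1:ℝ≥0∞) ≤ ENNReal.ofReal (Real.exp (ε i)) := by
        rw [← ENNReal.ofReal_one]
        exact ENNReal.ofReal_le_ofReal (Real.one_le_exp (hε0 i).le)
      simp only [Kernel.const_apply]
      exact le_mul_of_one_le_left (by simp) h1
    · intro P hP
      haveI hpb : ∀ i : Fin n, IsProbabilityMeasure
          (Measure.bind P fun x => (Kernel.const (Fin 1) (Measure.dirac ())) x) := by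
        intro i; constructor
        rw [Measure.bind_apply MeasurableSet.univ (Kernel.measurable _).aemeasurable]
        simp
      refine le_trans (ENNReal.ofReal_le_one.mpr (by linarith)) ?_
      rw [← measure_univ (μ := Measure.pi fun _ : Fin n =>
        Measure.bind P fun x => (Kernel.const (Fin 1) (Measure.dirac ())) x)]
      refine measure_mono fun y _ => ?_
      intro v
      have hv : ({v} : Set (Fin 1)) = Set.univ := by
        ext x; simp [Subsingleton.elim x v]
      have : (P {v}).toReal = 1 := by rw [hv, measure_univ]; simp
      simp only [this, sub_self, abs_zero]
      positivity
  · -- 1 < d : randomized response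
    have hd2R : (2:ℝ) ≤ d := by exact_mod_cast hd2
    have hd0R : (0:ℝ) < d := by linarith
    -- basic constants
    set a : Fin n → ℝ := fun i => 1 / (Real.exp (ε i / 2) + 1) with ha_def
    set g : Fin n → ℝ := fun i => 1 - 2 * a i with hg_def
    have hE1 : ∀ i, 1 < Real.exp (ε i / 2) := fun i =>
      Real.one_lt_exp_iff.mpr (by linarith [hε0 i])
    have hE2 : ∀ i, Real.exp (ε i / 2) ≤ 2 := by
      intro i
      have h1 : ε i / 2 ≤ Real.log 2 := by
        have := Real.log_two_gt_d9; linarith [hε1 i]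
      calc Real.exp (ε i / 2) ≤ Real.exp (Real.log 2) := Real.exp_le_exp.mpr h1
        _ = 2 := Real.exp_log (by norm_num)
    have ha_pos : ∀ i, 0 < a i := fun i => by
      simp only [ha_def]; positivity
    have ha_half : ∀ i, a i < 1/2 := by
      intro i
      simp only [ha_def]
      rw [div_lt_div_iff₀ (by positivity) (by norm_num)]
      linarith [hE1 i]
    have hg_pos : ∀ i, 0 < g i := fun i => by
      simp only [hg_def]; linarith [ha_half i]
    have hga : ∀ i, ε i / 6 ≤ g i := by
      intro i
      have hE := Real.add_one_le_exp (ε i / 2)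
      have h2 := hE2 i
      have he0 := hε0 i
      have hden : (0:ℝ) < Real.exp (ε i/2) + 1 := by positivity
      have key : (ε i/6) * (Real.exp (ε i/2)+1) ≤ Real.exp (ε i/2) - 1 := by
        nlinarith [mul_le_mul_of_nonneg_left h2 (le_of_lt he0)]
      simp only [hg_def, ha_def]
      have heq : 1 - 2*(1/(Real.exp (ε i/2)+1))
          = (Real.exp (ε i/2) - 1)/(Real.exp (ε i/2)+1) := by field_simp; ring
      rw [heq, le_div_iff₀ hden]
      exact key
    -- the randomized response distribution
    set θ : Fin n → Fin d → Fin d → Bool → ℝ :=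
      fun i x v b => if b = decide (x = v) then 1 - a i else a i with hθ_def
    have hθ_pos : ∀ i x v b, 0 < θ i x v b := by
      intro i x v b; simp only [hθ_def]
      split <;> linarith [ha_pos i, ha_half i]
    have hθ_le : ∀ i x v b, θ i x v b ≤ 1 - a i := by
      intro i x v b; simp only [hθ_def]
      split <;> linarith [ha_half i]
    have hθ_ge : ∀ i x v b, a i ≤ θ i x v b := by
      intro i x v b; simp only [hθ_def]
      split <;> linarith [ha_half i]
    have hθ_sum : ∀ i x v, θ i x v true + θ i x v false = 1 := by
      intro i x v
      by_cases h : x = v <;> simp [hθ_def, h] <;> ring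
    set p : Fin n → Fin d → (Fin d → Bool) → ℝ :=
      fun i x y => ∏ v, θ i x v (y v) with hp_def
    have hp_nonneg : ∀ i x y, 0 ≤ p i x y := fun i x y =>
      Finset.prod_nonneg fun v _ => (hθ_pos i x v (y v)).le
    have hp_sum : ∀ i x, ∑ y : Fin d → Bool, p i x y = 1 := by
      intro i x
      simp only [hp_def]
      rw [← Fintype.piFinset_univ, ← Finset.prod_univ_sum]
      exact Finset.prod_eq_one fun v _ => by rw [Fintype.sum_bool]; exact hθ_sum i x v
    have hmeasΩ : ∀ (W : Set (Fin d → Bool)), MeasurableSet W := fun W =>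
      (Set.to_countable W).measurableSet
    -- the kernel measures
    set m : Fin n → Fin d → Measure (Fin d → Bool) :=
      fun i x => ∑ y : Fin d → Bool, (ENNReal.ofReal (p i x y)) • Measure.dirac y
      with hm_def
    have hm_apply : ∀ i x (W : Set (Fin d → Bool)),
        m i x W = ∑ y : Fin d → Bool, ENNReal.ofReal (p i x y) * W.indicator 1 y := by
      intro i x W
      simp only [hm_def]
      rw [Measure.finset_sum_apply]
      exact Finset.sum_congr rfl fun y _ => by
        rw [Measure.smul_apply, smul_eq_mul, Measure.dirac_apply' y (hmeasΩ W)]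
    have hm_single : ∀ i x (y : Fin d → Bool), m i x {y} = ENNReal.ofReal (p i x y) := by
      intro i x y
      rw [hm_apply]
      rw [Finset.sum_eq_single y]
      · simp
      · intro b _ hb
        have : b ∉ ({y} : Set (Fin d → Bool)) := by simp [hb]
        rw [Set.indicator_of_notMem this, mul_zero]
      · intro h; exact absurd (Finset.mem_univ y) h
    have hm_univ : ∀ i x, m i x Set.univ = 1 := by
      intro i x
      rw [hm_apply]
      simp only [Set.indicator_univ, Pi.one_apply, mul_one]
      rw [← ENNReal.ofReal_sum_of_nonneg (fun y _ => hp_nonneg i x y), hp_sum,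
        ENNReal.ofReal_one]
    set C : ∀ _ : Fin n, Kernel (Fin d) (Fin d → Bool) :=
      fun i => ⟨m i, measurable_of_countable _⟩ with hC_def
    have hC_app : ∀ i x, (C i) x = m i x := fun i x => rfl
    -- estimator
    set S : ℝ := ∑ i, ε i ^ 2 with hS_def
    have hS_pos : 0 < S := by
      rw [hS_def]
      exact Finset.sum_pos (fun i _ => pow_pos (hε0 i) 2) ⟨⟨0, hn0⟩, Finset.mem_univ _⟩
    have hS_ne : S ≠ 0 := ne_of_gt hS_pos
    set L : ℝ := Real.log ((d:ℝ) / β) with hL_def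
    have hL_pos : 0 < L := by
      rw [hL_def]
      apply Real.log_pos
      rw [lt_div_iff₀ hβ0]; linarith
    set t : ℝ := 20 * Real.sqrt (L / S) with ht_def
    have ht0 : 0 ≤ t := by rw [ht_def]; positivity
    set Z : Fin n → (Fin d → Bool) → Fin d → ℝ :=
      fun i z v => ((if z v then 1 else 0) - a i) / g i with hZ_def
    set Traw : (∀ _ : Fin n, Fin d → Bool) → Fin d → ℝ :=
      fun y v => (∑ i, ε i ^ 2 * Z i (y i) v) / S with hTraw_def
    set estim : (∀ _ : Fin n, Fin d → Bool) → Fin d → ℝ :=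
      fun y v => min 1 (max 0 (Traw y v)) with hestim_def
    have hZb : ∀ i z v, |Z i z v| ≤ 6 / ε i := by
      intro i z v
      have h1 : |(if z v then (1:ℝ) else 0) - a i| ≤ 1 := by
        have hcase : (if z v then (1:ℝ) else 0) = 0 ∨ (if z v then (1:ℝ) else 0) = 1 := by
          by_cases hzv : z v = true <;> simp [hzv]
        rcases hcase with h | h <;> rw [h] <;>
          exact abs_le.mpr ⟨by linarith [ha_pos i, ha_half i],
            by linarith [ha_pos i, ha_half i]⟩
      simp only [hZ_def]
      rw [abs_div, abs_of_pos (hg_pos i)]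
      calc |(if z v then (1:ℝ) else 0) - a i| / g i
          ≤ 1 / (ε i / 6) := div_le_div₀ (by norm_num) h1 (by linarith [hε0 i]) (hga i)
        _ = 6 / ε i := one_div_div _ _
    refine ⟨fun _ => (Fin d → Bool), fun _ => inferInstance, C, estim, ?_, ?_,
      measurable_of_countable _, ?_⟩
    · -- Markov
      intro i
      refine ⟨fun x => ⟨?_⟩⟩
      rw [hC_app]; exact hm_univ i x
    · -- LDP
      intro i x x' W hW
      have hkey : ∀ y : Fin d → Bool, p i x y ≤ Real.exp (ε i) * p i x' y := by
        intro y
        by_cases hxx : x = x'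
        · subst hxx
          exact le_mul_of_one_le_left (hp_nonneg i x y) (Real.one_le_exp (hε0 i).le)
        · have hsub : ({x, x'} : Finset (Fin d)) ⊆ Finset.univ := Finset.subset_univ _
          have hsplit : ∀ z : Fin d, p i z y =
              (∏ v ∈ Finset.univ \ {x, x'}, θ i z v (y v))
                * (θ i z x (y x) * θ i z x' (y x')) := by
            intro z
            simp only [hp_def]
            rw [← Finset.prod_sdiff hsub, Finset.prod_pair hxx]
          have hReq : (∏ v ∈ Finset.univ \ ({x, x'} : Finset (Fin d)), θ i x v (y v))
              = ∏ v ∈ Finset.univ \ ({x, x'} : Finset (Fin d)), θ i x' v (y v) := by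
            refine Finset.prod_congr rfl fun v hv => ?_
            rw [Finset.mem_sdiff, Finset.mem_insert, Finset.mem_singleton] at hv
            push_neg at hv
            have h1 : x ≠ v := fun h => hv.2.1 h.symm
            have h2 : x' ≠ v := fun h => hv.2.2 h.symm
            simp [hθ_def, h1, h2]
          have hR0 : 0 ≤ ∏ v ∈ Finset.univ \ ({x, x'} : Finset (Fin d)), θ i x v (y v) :=
            Finset.prod_nonneg fun v _ => (hθ_pos i x v (y v)).le
          have hEq : (1 - a i)^2 = Real.exp (ε i) * (a i)^2 := by
            have hx2 : Real.exp (ε i) = Real.exp (ε i/2) * Real.exp (ε i/2) := by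
              rw [← Real.exp_add]; ring_nf
            have hden : Real.exp (ε i / 2) + 1 ≠ 0 := by positivity
            simp only [ha_def]
            rw [hx2]; field_simp; ring
          have hb1 : θ i x x (y x) * θ i x x' (y x') ≤ (1 - a i)^2 := by
            nlinarith [hθ_le i x x (y x), hθ_le i x x' (y x'),
              hθ_pos i x x (y x), hθ_pos i x x' (y x'), ha_half i]
          have hb2 : (a i)^2 ≤ θ i x' x (y x) * θ i x' x' (y x') := by
            nlinarith [hθ_ge i x' x (y x), hθ_ge i x' x' (y x'), ha_pos i]
          calc p i x y
              = (∏ v ∈ Finset.univ \ ({x, x'} : Finset (Fin d)), θ i x v (y v))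
                * (θ i x x (y x) * θ i x x' (y x')) := hsplit x
            _ ≤ (∏ v ∈ Finset.univ \ ({x, x'} : Finset (Fin d)), θ i x v (y v))
                * (1 - a i)^2 := mul_le_mul_of_nonneg_left hb1 hR0
            _ = Real.exp (ε i) * ((∏ v ∈ Finset.univ \ ({x, x'} : Finset (Fin d)),
                θ i x v (y v)) * (a i)^2) := by rw [hEq]; ring
            _ ≤ Real.exp (ε i) * ((∏ v ∈ Finset.univ \ ({x, x'} : Finset (Fin d)),
                θ i x v (y v)) * (θ i x' x (y x) * θ i x' x' (y x'))) := by
                  exact mul_le_mul_of_nonneg_left (mul_le_mul_of_nonneg_left hb2 hR0)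
                    (Real.exp_nonneg _)
            _ = Real.exp (ε i) * p i x' y := by rw [hsplit x', hReq]
      rw [hC_app, hC_app, hm_apply, hm_apply, Finset.mul_sum]
      refine Finset.sum_le_sum fun y _ => ?_
      rw [← mul_assoc, ← ENNReal.ofReal_mul (Real.exp_nonneg _)]
      exact mul_le_mul_left (ENNReal.ofReal_le_ofReal (hkey y)) _
    · -- main probability bound
      intro P hP
      set q : Fin d → ℝ := fun x => (P {x}).toReal with hq_def
      have hq0 : ∀ x, 0 ≤ q x := fun x => ENNReal.toReal_nonneg
      have hq1 : ∀ x, q x ≤ 1 := by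
        intro x
        simp only [hq_def]
        simpa using ENNReal.toReal_mono ENNReal.one_ne_top (prob_le_one (μ := P) (s := {x}))
      have hPofReal : ∀ x, P {x} = ENNReal.ofReal (q x) := fun x =>
        (ENNReal.ofReal_toReal (measure_ne_top P _)).symm
      have hPsum : ∑ x : Fin d, P {x} = 1 := by
        have h := measure_apply_fintype P Set.univ
        simp only [Set.mem_univ, Finset.filter_true, measure_univ] at h
        exact h.symm
      have hqsum : ∑ x, q x = 1 := by
        have h2 : ∑ x, q x = (∑ x : Fin d, P {x}).toReal :=
          (ENNReal.toReal_sum (fun x _ => measure_ne_top P _)).symm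
        rw [h2, hPsum, ENNReal.toReal_one]
      set ρ : Fin n → (Fin d → Bool) → ℝ := fun i y => ∑ x, q x * p i x y with hρ_def
      have hρ0 : ∀ i y, 0 ≤ ρ i y := fun i y =>
        Finset.sum_nonneg fun x _ => mul_nonneg (hq0 x) (hp_nonneg i x y)
      have hρsum : ∀ i, ∑ y : Fin d → Bool, ρ i y = 1 := by
        intro i
        simp only [hρ_def]
        rw [Finset.sum_comm]
        calc ∑ x, ∑ y : Fin d → Bool, q x * p i x y
            = ∑ x, q x := Finset.sum_congr rfl fun x _ => by
              rw [← Finset.mul_sum, hp_sum, mul_one]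
          _ = 1 := hqsum
      have hμ_single : ∀ i (y : Fin d → Bool),
          (Measure.bind P fun x => (C i) x) {y} = ENNReal.ofReal (ρ i y) := by
        intro i y
        rw [Measure.bind_apply (hmeasΩ {y}) (Kernel.measurable (C i)).aemeasurable, lintegral_fintype]
        simp only [hC_app, hm_single, hPofReal]
        rw [hρ_def]
        rw [ENNReal.ofReal_sum_of_nonneg (fun x _ => mul_nonneg (hq0 x) (hp_nonneg i x y))]
        exact Finset.sum_congr rfl fun x _ => by
          rw [mul_comm (q x) (p i x y), ENNReal.ofReal_mul (hp_nonneg i x y)]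
      haveI hprob_i : ∀ i, IsProbabilityMeasure (Measure.bind P fun x => (C i) x) := by
        intro i; constructor
        rw [Measure.bind_apply MeasurableSet.univ (Kernel.measurable (C i)).aemeasurable,
          lintegral_fintype]
        simp only [hC_app, hm_univ, one_mul]
        exact hPsum
      haveI hsf : ∀ i, SigmaFinite (Measure.bind P fun x => (C i) x) := fun i => by
        haveI := hprob_i i; infer_instance
      set ν : Measure (∀ _ : Fin n, Fin d → Bool) :=
        Measure.pi (fun i => Measure.bind P fun x => (C i) x) with hν_def
      haveI hν_prob : IsProbabilityMeasure ν := by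
        rw [hν_def]; infer_instance
      have hν_single : ∀ y : (∀ _ : Fin n, Fin d → Bool),
          ν {y} = ENNReal.ofReal (∏ i, ρ i (y i)) := by
        intro y
        calc ν {y} = ∏ i, (Measure.bind P fun x => (C i) x) {(y i)} := by
              rw [hν_def, ← Set.univ_pi_singleton y]
              exact Measure.pi_pi _ _
          _ = ∏ i, ENNReal.ofReal (ρ i (y i)) :=
              Finset.prod_congr rfl fun i _ => hμ_single i (y i)
          _ = ENNReal.ofReal (∏ i, ρ i (y i)) :=
              (ofReal_prod_of_nonneg _ _ fun i _ => hρ0 i (y i)).symm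
      -- expectation computations
      have hind : ∀ i x v, ∑ y : Fin d → Bool,
          p i x y * (if y v then (1:ℝ) else 0) = θ i x v true := by
        intro i x v
        set f : Fin d → Bool → ℝ := fun w b =>
          if w = v then θ i x w b * (if b = true then (1:ℝ) else 0) else θ i x w b
          with hf_def
        have hfold : ∀ y : Fin d → Bool, p i x y * (if y v then (1:ℝ) else 0)
            = ∏ w, f w (y w) := by
          intro y
          simp only [hp_def, hf_def]
          rw [Finset.prod_eq_prod_diff_singleton_mul (Finset.mem_univ v)
              (fun w => θ i x w (y w)),
            Finset.prod_eq_prod_diff_singleton_mul (Finset.mem_univ v)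
              (fun w => if w = v then θ i x w (y w) * (if y w then (1:ℝ) else 0)
                else θ i x w (y w))]
          have hdiff : ∏ w ∈ Finset.univ \ {v},
              (if w = v then θ i x w (y w) * (if y w then (1:ℝ) else 0)
                else θ i x w (y w))
              = ∏ w ∈ Finset.univ \ {v}, θ i x w (y w) :=
            Finset.prod_congr rfl fun w hw => by
              rw [Finset.mem_sdiff, Finset.mem_singleton] at hw
              rw [if_neg hw.2]
          rw [hdiff, if_pos rfl]
          ring
        rw [Finset.sum_congr rfl (fun y _ => hfold y)]
        have hps := Finset.prod_univ_sum (fun _ : Fin d => (Finset.univ : Finset Bool)) f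
        rw [Fintype.piFinset_univ] at hps
        rw [← hps]
        have hw1 : ∀ w : Fin d, w ≠ v → ∑ b : Bool, f w b = 1 := by
          intro w hw
          rw [Fintype.sum_bool]
          simp only [hf_def, if_neg hw]
          exact hθ_sum i x w
        have hv1 : ∑ b : Bool, f v b = θ i x v true := by
          rw [Fintype.sum_bool]
          simp only [hf_def, if_pos rfl]
          simp
        rw [Finset.prod_eq_single v (fun w _ hw => hw1 w hw)
          (fun h => absurd (Finset.mem_univ v) h), hv1]
      have hsum_ind : ∀ i v, ∑ y : Fin d → Bool,
          ρ i y * (if y v then (1:ℝ) else 0) = a i + g i * q v := by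
        intro i v
        have h1 : ∑ y : Fin d → Bool, ρ i y * (if y v then (1:ℝ) else 0)
            = ∑ x, q x * θ i x v true := by
          simp only [hρ_def]
          calc ∑ y : Fin d → Bool, (∑ x, q x * p i x y) * (if y v then (1:ℝ) else 0)
              = ∑ y : Fin d → Bool, ∑ x, q x * (p i x y * (if y v then (1:ℝ) else 0)) := by
                refine Finset.sum_congr rfl fun y _ => ?_
                rw [Finset.sum_mul]
                exact Finset.sum_congr rfl fun x _ => by ring
            _ = ∑ x, ∑ y : Fin d → Bool, q x * (p i x y * (if y v then (1:ℝ) else 0)) :=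
                Finset.sum_comm
            _ = ∑ x, q x * θ i x v true := by
                refine Finset.sum_congr rfl fun x _ => ?_
                rw [← Finset.mul_sum, hind i x v]
        rw [h1]
        have h2 : ∀ x, θ i x v true = a i + (if x = v then g i else 0) := by
          intro x
          simp only [hθ_def, hg_def]
          by_cases h : x = v
          · rw [if_pos (by simp [h]), if_pos h]; ring
          · rw [if_neg (by simp [h]), if_neg h, add_zero]
        rw [Finset.sum_congr rfl (fun x _ => by rw [h2 x])]
        rw [Finset.sum_congr rfl (fun x (_ : x ∈ Finset.univ) =>
          mul_add (q x) (a i) (if x = v then g i else 0)), Finset.sum_add_distrib]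
        have h3 : ∑ x, q x * a i = a i := by
          rw [← Finset.sum_mul, hqsum, one_mul]
        have h4 : ∑ x, q x * (if x = v then g i else 0) = g i * q v := by
          simp only [mul_ite, mul_zero]
          rw [Finset.sum_ite_eq' Finset.univ v (fun x => q x * g i)]
          simp [mul_comm]
        rw [h3, h4]
      have hmean : ∀ i v, ∑ y : Fin d → Bool, ρ i y * Z i y v = q v := by
        intro i v
        have hgne : g i ≠ 0 := ne_of_gt (hg_pos i)
        have hdiv : ∀ r u : ℝ, r * ((u - a i) / g i) = (r * u - a i * r) / g i := by
          intro r u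
          rw [eq_div_iff hgne]
          rw [show r * ((u - a i) / g i) * g i = r * ((u - a i) / g i * g i) by ring,
            div_mul_cancel₀ _ hgne]
          ring
        have h5 : ∀ y : Fin d → Bool, ρ i y * Z i y v
            = (ρ i y * (if y v then (1:ℝ) else 0) - a i * ρ i y) / g i := by
          intro y; simp only [hZ_def]; exact hdiv (ρ i y) _
        rw [Finset.sum_congr rfl (fun y _ => h5 y), ← Finset.sum_div,
          Finset.sum_sub_distrib, ← Finset.mul_sum, hsum_ind i v, hρsum i, mul_one,
          add_sub_cancel_left, mul_comm (g i) (q v), mul_div_assoc, div_self hgne,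
          mul_one]
      -- bound on terms
      have hb1 : ∀ v i (z : Fin d → Bool), |ε i ^ 2 * (Z i z v - q v)| ≤ 7 * ε i := by
        intro v i z
        have hz := hZb i z v
        have hne : ε i ≠ 0 := ne_of_gt (hε0 i)
        have expand : ε i ^ 2 * (6 / ε i + 1) = 6 * ε i + ε i ^ 2 := by
          field_simp
        calc |ε i ^ 2 * (Z i z v - q v)| = ε i ^ 2 * |Z i z v - q v| := by
              rw [abs_mul, abs_of_nonneg (sq_nonneg _)]
          _ ≤ ε i ^ 2 * (6 / ε i + 1) := by
              apply mul_le_mul_of_nonneg_left _ (sq_nonneg _)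
              refine le_trans (abs_sub _ _) ?_
              rw [abs_of_nonneg (hq0 v)]
              linarith [hq1 v]
          _ ≤ 7 * ε i := by
              rw [expand]; nlinarith [hε0 i, hε1 i]
      have hb2 : ∀ v i (z : Fin d → Bool), |-(ε i ^ 2 * (Z i z v - q v))| ≤ 7 * ε i := by
        intro v i z; rw [abs_neg]; exact hb1 v i z
      have hm1 : ∀ v i, ∑ z : Fin d → Bool, ρ i z * (ε i ^ 2 * (Z i z v - q v)) = 0 := by
        intro v i
        have hr : ∀ z : Fin d → Bool, ρ i z * (ε i ^ 2 * (Z i z v - q v))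
            = ε i ^ 2 * (ρ i z * Z i z v) - ε i ^ 2 * q v * ρ i z := fun z => by ring
        rw [Finset.sum_congr rfl (fun z _ => hr z), Finset.sum_sub_distrib,
          ← Finset.mul_sum, ← Finset.mul_sum, hmean i v, hρsum i, mul_one]
        ring
      have hm2 : ∀ v i, ∑ z : Fin d → Bool, ρ i z * (-(ε i ^ 2 * (Z i z v - q v))) = 0 := by
        intro v i
        have hr : ∀ z : Fin d → Bool, ρ i z * (-(ε i ^ 2 * (Z i z v - q v)))
            = -(ρ i z * (ε i ^ 2 * (Z i z v - q v))) := fun z => by ring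
        rw [Finset.sum_congr rfl (fun z _ => hr z), Finset.sum_neg_distrib, hm1 v i,
          neg_zero]
      -- rewrite goal with q
      have hqrw : ∀ v : Fin d, (P {v}).toReal = q v := fun v => rfl
      simp only [hqrw]
      -- reduce to bad-event bound
      suffices hGc : ν {y : ∀ _ : Fin n, Fin d → Bool |
          ∀ v : Fin d, |estim y v - q v| ≤ min t 1}ᶜ ≤ ENNReal.ofReal β by
        have h2 : ν Set.univ ≤ ν {y : ∀ _ : Fin n, Fin d → Bool |
            ∀ v : Fin d, |estim y v - q v| ≤ min t 1}
            + ν {y : ∀ _ : Fin n, Fin d → Bool |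
            ∀ v : Fin d, |estim y v - q v| ≤ min t 1}ᶜ := by
          rw [← Set.union_compl_self {y : ∀ _ : Fin n, Fin d → Bool |
            ∀ v : Fin d, |estim y v - q v| ≤ min t 1}]
          exact measure_union_le _ _
        rw [ENNReal.ofReal_sub 1 hβ0.le, ENNReal.ofReal_one, tsub_le_iff_right]
        calc (1:ℝ≥0∞) = ν Set.univ := measure_univ.symm
          _ ≤ _ + _ := h2
          _ ≤ _ + ENNReal.ofReal β := add_le_add_right hGc _
      rcases le_or_gt 1 t with hc1 | hc1
      · -- trivial case: the radius is 1
        have hGu : {y : ∀ _ : Fin n, Fin d → Bool |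
            ∀ v : Fin d, |estim y v - q v| ≤ min t 1} = Set.univ := by
          apply Set.eq_univ_iff_forall.mpr
          intro y v
          rw [min_eq_right hc1]
          obtain ⟨e0, e1⟩ := clamp_mem (Traw y v)
          simp only [hestim_def]
          exact abs_le.mpr ⟨by linarith [hq1 v], by linarith [hq0 v]⟩
        rw [hGu, Set.compl_univ]
        simp
      · -- Chernoff case
        have hcher : ∀ (F : Fin n → (Fin d → Bool) → ℝ),
            (∀ i z, |F i z| ≤ 7 * ε i) → (∀ i, ∑ z : Fin d → Bool, ρ i z * F i z = 0) →
            ν {y : ∀ _ : Fin n, Fin d → Bool | S * t ≤ ∑ i, F i (y i)}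
              ≤ ENNReal.ofReal (Real.exp (-(S * t ^ 2) / 196)) := by
          intro F hFb hF0
          have hmgf : ∀ i, ∑ z : Fin d → Bool,
              ρ i z * Real.exp ((t/98) * F i z) ≤ Real.exp ((t/98)^2 * (7 * ε i)^2) := by
            intro i
            refine mgf_bound (ρ i) (hρ0 i) (hρsum i) (F i) (7 * ε i) (t/98)
              (hFb i) (hF0 i) (div_nonneg ht0 (by norm_num)) ?_
              (by linarith [hε0 i])
            have := hε1 i
            have := hε0 i
            nlinarith [hc1.le, ht0]
          have key := chernoff_real (n := n) (Ω := fun _ => (Fin d → Bool)) ρ hρ0 F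
            (t/98) (div_nonneg ht0 (by norm_num)) (fun i => (t/98)^2 * (7 * ε i)^2)
            hmgf (S * t)
          have harith : ∑ i, (t/98)^2 * (7 * ε i)^2 - (t/98) * (S * t)
              = -(S * t ^ 2) / 196 := by
            have h1 : ∑ i, (t/98)^2 * (7 * ε i)^2 = (t/98)^2 * 49 * S := by
              rw [hS_def, Finset.mul_sum]
              exact Finset.sum_congr rfl fun i _ => by ring
            rw [h1]; ring
          calc ν {y : ∀ _ : Fin n, Fin d → Bool | S * t ≤ ∑ i, F i (y i)}
              = ∑ y ∈ Finset.univ.filter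
                  (fun y : (∀ _ : Fin n, Fin d → Bool) => S * t ≤ ∑ i, F i (y i)),
                  ENNReal.ofReal (∏ i, ρ i (y i)) := by
                rw [measure_apply_fintype]
                refine Finset.sum_congr ?_ (fun y _ => hν_single y)
                apply Finset.filter_congr
                intro y _
                simp [Set.mem_setOf_eq]
            _ = ENNReal.ofReal (∑ y ∈ Finset.univ.filter
                  (fun y : (∀ _ : Fin n, Fin d → Bool) => S * t ≤ ∑ i, F i (y i)),
                  ∏ i, ρ i (y i)) :=
                (ENNReal.ofReal_sum_of_nonneg fun y _ =>
                  Finset.prod_nonneg fun i _ => hρ0 i (y i)).symm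
            _ ≤ ENNReal.ofReal (Real.exp (-(S * t ^ 2) / 196)) :=
                ENNReal.ofReal_le_ofReal (harith ▸ key)
        -- inclusion of the bad event in a union of tail events
        have hsub : {y : ∀ _ : Fin n, Fin d → Bool |
            ∀ v : Fin d, |estim y v - q v| ≤ min t 1}ᶜ ⊆
            ⋃ v : Fin d,
              ({y : ∀ _ : Fin n, Fin d → Bool |
                  S * t ≤ ∑ i, ε i ^ 2 * (Z i (y i) v - q v)} ∪
               {y : ∀ _ : Fin n, Fin d → Bool |
                  S * t ≤ ∑ i, -(ε i ^ 2 * (Z i (y i) v - q v))}) := by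
          intro y hy
          simp only [Set.mem_compl_iff, Set.mem_setOf_eq, not_forall] at hy
          obtain ⟨v, hv⟩ := hy
          push_neg at hv
          rw [min_eq_left hc1.le] at hv
          simp only [hestim_def] at hv
          have h1 : t < |Traw y v - q v| :=
            lt_of_lt_of_le hv (clamp_dist (Traw y v) (q v) (hq0 v) (hq1 v))
          have h2 : Traw y v - q v = (∑ i, ε i ^ 2 * (Z i (y i) v - q v)) / S := by
            simp only [hTraw_def]
            rw [eq_div_iff hS_ne, sub_mul, div_mul_cancel₀ _ hS_ne, hS_def,
              Finset.mul_sum, ← Finset.sum_sub_distrib]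
            exact Finset.sum_congr rfl fun i _ => by ring
          rw [h2, abs_div, abs_of_pos hS_pos] at h1
          have h3 : S * t < |∑ i, ε i ^ 2 * (Z i (y i) v - q v)| := by
            have := (lt_div_iff₀ hS_pos).mp h1
            linarith
          rcases abs_cases (∑ i, ε i ^ 2 * (Z i (y i) v - q v)) with ⟨habs, _⟩ | ⟨habs, _⟩
          · refine Set.mem_iUnion.mpr ⟨v, Or.inl ?_⟩
            exact le_of_lt (by rwa [habs] at h3)
          · refine Set.mem_iUnion.mpr ⟨v, Or.inr ?_⟩
            show S * t ≤ ∑ i, -(ε i ^ 2 * (Z i (y i) v - q v))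
            rw [habs] at h3
            rw [Finset.sum_neg_distrib]
            linarith
        refine le_trans (measure_mono hsub) (le_trans (measure_iUnion_le _) ?_)
        rw [tsum_fintype]
        refine le_trans (Finset.sum_le_sum fun v _ => measure_union_le _ _) ?_
        have hEach : ∀ v : Fin d,
            ν {y : ∀ _ : Fin n, Fin d → Bool |
                S * t ≤ ∑ i, ε i ^ 2 * (Z i (y i) v - q v)} +
            ν {y : ∀ _ : Fin n, Fin d → Bool |
                S * t ≤ ∑ i, -(ε i ^ 2 * (Z i (y i) v - q v))}
            ≤ ENNReal.ofReal (2 * Real.exp (-(S * t ^ 2) / 196)) := by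
          intro v
          have hA := hcher (fun i z => ε i ^ 2 * (Z i z v - q v)) (fun i z => hb1 v i z)
            (fun i => hm1 v i)
          have hB := hcher (fun i z => -(ε i ^ 2 * (Z i z v - q v))) (fun i z => hb2 v i z)
            (fun i => hm2 v i)
          calc _ ≤ ENNReal.ofReal (Real.exp (-(S * t ^ 2) / 196))
                + ENNReal.ofReal (Real.exp (-(S * t ^ 2) / 196)) := add_le_add hA hB
            _ = ENNReal.ofReal (2 * Real.exp (-(S * t ^ 2) / 196)) := by
                rw [← ENNReal.ofReal_add (Real.exp_nonneg _) (Real.exp_nonneg _)]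
                congr 1; ring
        refine le_trans (Finset.sum_le_sum fun v _ => hEach v) ?_
        rw [Finset.sum_const, Finset.card_univ, Fintype.card_fin, nsmul_eq_mul]
        rw [← ENNReal.ofReal_natCast d, ← ENNReal.ofReal_mul (Nat.cast_nonneg d)]
        apply ENNReal.ofReal_le_ofReal
        -- final real arithmetic
        have hSt : S * t ^ 2 = 400 * L := by
          rw [ht_def, mul_pow, Real.sq_sqrt (div_nonneg hL_pos.le hS_pos.le),
            mul_comm S, mul_assoc, div_mul_cancel₀ _ hS_ne]
          norm_num
        have hexp : Real.exp (-(S * t ^ 2) / 196) ≤ (β / (d:ℝ)) ^ 2 := by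
          have h1 : -(S * t ^ 2) / 196 ≤ -2 * L := by rw [hSt]; nlinarith [hL_pos]
          have h2 : Real.exp (-2 * L) = (β / (d:ℝ)) ^ 2 := by
            rw [hL_def, show (-2:ℝ) * Real.log ((d:ℝ)/β)
              = -(Real.log ((d:ℝ)/β) + Real.log ((d:ℝ)/β)) by ring]
            rw [Real.exp_neg, Real.exp_add, Real.exp_log (by positivity)]
            rw [show ((d:ℝ)/β) * ((d:ℝ)/β) = ((d:ℝ)/β)^2 by ring, ← inv_pow, inv_div]
          calc Real.exp (-(S * t ^ 2) / 196) ≤ Real.exp (-2 * L) := Real.exp_le_exp.mpr h1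
            _ = (β / (d:ℝ)) ^ 2 := h2
        have h3 : (d:ℝ) * (2 * (β / (d:ℝ)) ^ 2) = 2 * β ^ 2 / d := by
          field_simp
        have h4 : 2 * β ^ 2 / (d:ℝ) ≤ β := by
          rw [div_le_iff₀ hd0R]
          nlinarith
        calc (d:ℝ) * (2 * Real.exp (-(S * t ^ 2) / 196))
            ≤ (d:ℝ) * (2 * (β / (d:ℝ)) ^ 2) := by
              apply mul_le_mul_of_nonneg_left _ (le_of_lt hd0R)
              linarith [hexp]
          _ = 2 * β ^ 2 / (d:ℝ) := h3
          _ ≤ β := h4
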